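/- Let L be a bounded distributive lattice, n ≥ 1, and let f : Lⁿ → L be an order-preserving function. Then f is a lattice polynomial function if and only if f satisfies condition (H) and condition (H*). -/

import Mathlib

open Classical

variable {L : Type*}

section Defs

variable [DistribLattice L] [BoundedOrder L]

/-- The ternary median term. -/
def med (x y z : L) : L := (x ⊔ y) ⊓ (x ⊔ z) ⊓ (y ⊔ z)

/-- Lattice polynomial functions of arity `n`: the smallest class of functions
`(Fin n → L) → L` containing projections and constants and closed under
pointwise binary meets and joins. -/
inductive IsLatticePolynomial {n : ℕ} : ((Fin n → L) → L) → Prop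
  | proj (k : Fin n) : IsLatticePolynomial fun x => x k
  | const (c : L) : IsLatticePolynomial fun _ => c
  | inf {f g : (Fin n → L) → L} :
      IsLatticePolynomial f → IsLatticePolynomial g →
      IsLatticePolynomial fun x => f x ⊓ g x
  | sup {f g : (Fin n → L) → L} :
      IsLatticePolynomial f → IsLatticePolynomial g →
      IsLatticePolynomial fun x => f x ⊔ g x

/-- Unary lattice polynomial functions: the smallest class of functions `L → L`
containing the identity and constants and closed under pointwise binary meets
and joins. -/
inductive IsUnaryLatticePolynomial : (L → L) → Prop
  | id : IsUnaryLatticePolynomial fun x : L => x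
  | const (c : L) : IsUnaryLatticePolynomial fun _ => c
  | inf {f g : L → L} :
      IsUnaryLatticePolynomial f → IsUnaryLatticePolynomial g →
      IsUnaryLatticePolynomial fun x => f x ⊓ g x
  | sup {f g : L → L} :
      IsUnaryLatticePolynomial f → IsUnaryLatticePolynomial g →
      IsUnaryLatticePolynomial fun x => f x ⊔ g x

/-- `h : L → L` preserves binary meets. -/
def PreservesInf (h : L → L) : Prop := ∀ x y : L, h (x ⊓ y) = h x ⊓ h y

/-- `h : L → L` preserves binary joins. -/
def PreservesSup (h : L → L) : Prop := ∀ x y : L, h (x ⊔ y) = h x ⊔ h y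

/-- Condition (H): `f(x ∧ c̄) = f(x) ∧ c` for all `c ∈ [f(0̄), f(1̄)]`. -/
def CondH {n : ℕ} (f : (Fin n → L) → L) : Prop :=
  ∀ (x : Fin n → L) (c : L), f (fun _ => ⊥) ≤ c → c ≤ f (fun _ => ⊤) →
    (f fun i => x i ⊓ c) = f x ⊓ c

/-- Condition (H*), the dual of (H): `f(x ∨ c̄) = f(x) ∨ c` for all `c ∈ [f(0̄), f(1̄)]`. -/
def CondHDual {n : ℕ} (f : (Fin n → L) → L) : Prop :=
  ∀ (x : Fin n → L) (c : L), f (fun _ => ⊥) ≤ c → c ≤ f (fun _ => ⊤) →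
    (f fun i => x i ⊔ c) = f x ⊔ c

/-- Condition (V): `f(x) = f(x ∧ c̄) ∨ f([x]_c)` for all `c ∈ [f(0̄), f(1̄)]`,
where the `i`-th component of `[x]_c` is `0` if `x i ≤ c`, and `x i` otherwise. -/
def CondV {n : ℕ} (f : (Fin n → L) → L) : Prop :=
  ∀ (x : Fin n → L) (c : L), f (fun _ => ⊥) ≤ c → c ≤ f (fun _ => ⊤) →
    f x = (f fun i => x i ⊓ c) ⊔ (f fun i => if x i ≤ c then ⊥ else x i)

/-- Condition (V*), the dual of (V): `f(x) = f(x ∨ c̄) ∧ f([x]^c)` for all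
`c ∈ [f(0̄), f(1̄)]`, where the `i`-th component of `[x]^c` is `1` if `c ≤ x i`,
and `x i` otherwise. -/
def CondVDual {n : ℕ} (f : (Fin n → L) → L) : Prop :=
  ∀ (x : Fin n → L) (c : L), f (fun _ => ⊥) ≤ c → c ≤ f (fun _ => ⊤) →
    f x = (f fun i => x i ⊔ c) ⊓ (f fun i => if c ≤ x i then ⊤ else x i)

/-- Condition (I): `f(c̄) = c` for all `c ∈ [f(0̄), f(1̄)]`. -/
def CondI {n : ℕ} (f : (Fin n → L) → L) : Prop :=
  ∀ c : L, f (fun _ => ⊥) ≤ c → c ≤ f (fun _ => ⊤) → f (fun _ => c) = c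

/-- A subset `S` of `L` is convex if `a ≤ b ≤ c` with `a, c ∈ S` implies `b ∈ S`. -/
def IsConvexSubset (S : Set L) : Prop :=
  ∀ ⦃a b c : L⦄, a ∈ S → c ∈ S → a ≤ b → b ≤ c → b ∈ S

/-- For every function `g = f_K^a` obtained from `f` by substituting constants for
variables (including `K = ∅`, i.e. `g = f`), the diagonal `δ_g` preserves binary meets.
Here `δ_{f_K^a}(x) = f(y)` where `y i = a i` for `i ∈ K` and `y i = x` otherwise. -/
def DiagSubstPreservesInf {n : ℕ} (f : (Fin n → L) → L) : Prop :=
  ∀ (K : Set (Fin n)) (a : Fin n → L) (x y : L),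
    (f fun i => if i ∈ K then a i else x ⊓ y) =
      (f fun i => if i ∈ K then a i else x) ⊓ (f fun i => if i ∈ K then a i else y)

/-- For every function `g = f_K^a` obtained from `f` by substituting constants for
variables (including `K = ∅`, i.e. `g = f`), the diagonal `δ_g` preserves binary joins. -/
def DiagSubstPreservesSup {n : ℕ} (f : (Fin n → L) → L) : Prop :=
  ∀ (K : Set (Fin n)) (a : Fin n → L) (x y : L),
    (f fun i => if i ∈ K then a i else x ⊔ y) =
      (f fun i => if i ∈ K then a i else x) ⊔ (f fun i => if i ∈ K then a i else y)

end Defs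

section Aux
set_option linter.unusedSectionVars false

theorem myDistAux {α : Type*} [DistribLattice α] {a b c p q : α} (hp : p ≤ a) (hq : q ≤ b) :
    ((a ⊓ c) ⊔ p) ⊓ ((b ⊓ c) ⊔ q) = ((a ⊓ b) ⊓ c) ⊔ (p ⊓ q) := by
  apply le_antisymm
  · rw [inf_sup_right, inf_sup_left, inf_sup_left]
    refine sup_le (sup_le ?_ ?_) (sup_le ?_ ?_)
    · exact le_sup_of_le_left (le_inf (le_inf (inf_le_left.trans inf_le_left)
        (inf_le_right.trans inf_le_left)) (inf_le_left.trans inf_le_right))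
    · exact le_sup_of_le_left (le_inf (le_inf (inf_le_left.trans inf_le_left)
        (inf_le_right.trans hq)) (inf_le_left.trans inf_le_right))
    · exact le_sup_of_le_left (le_inf (le_inf (inf_le_left.trans hp)
        (inf_le_right.trans inf_le_left)) (inf_le_right.trans inf_le_right))
    · exact le_sup_right
  · refine sup_le (le_inf ?_ ?_) (inf_le_inf le_sup_right le_sup_right)
    · exact le_sup_of_le_left (le_inf (inf_le_left.trans inf_le_left) inf_le_right)
    · exact le_sup_of_le_left (le_inf (inf_le_left.trans inf_le_right) inf_le_right)

theorem myDistAuxDual {α : Type*} [DistribLattice α] {a b c p q : α} (hp : a ≤ p) (hq : b ≤ q) :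
    ((a ⊔ c) ⊓ p) ⊔ ((b ⊔ c) ⊓ q) = ((a ⊔ b) ⊔ c) ⊓ (p ⊔ q) :=
  myDistAux (α := αᵒᵈ) hp hq

variable {L : Type*} [DistribLattice L] [BoundedOrder L] {n : ℕ}

theorem IsLatticePolynomial.monotone' {f : (Fin n → L) → L}
    (h : IsLatticePolynomial f) : Monotone f := by
  induction h with
  | proj k => exact fun a b hab => hab k
  | const c => exact monotone_const
  | inf hf hg ihf ihg => exact fun a b hab => inf_le_inf (ihf hab) (ihg hab)
  | sup hf hg ihf ihg => exact fun a b hab => sup_le_sup (ihf hab) (ihg hab)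

theorem myKeyInf {f : (Fin n → L) → L} (h : IsLatticePolynomial f) :
    ∀ (x : Fin n → L) (c : L),
      (f fun i => x i ⊓ c) = (f x ⊓ c) ⊔ f (fun _ => ⊥) := by
  induction h with
  | proj k => intro x c; simp
  | const d => intro x c; exact (sup_eq_right.mpr inf_le_left).symm
  | @inf f g hf hg ihf ihg =>
    intro x c
    simp only [ihf, ihg]
    exact myDistAux (hf.monotone' fun i => bot_le) (hg.monotone' fun i => bot_le)
  | @sup f g hf hg ihf ihg =>
    intro x c
    simp only [ihf, ihg]
    rw [inf_sup_right, sup_sup_sup_comm]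

theorem myKeySup {f : (Fin n → L) → L} (h : IsLatticePolynomial f) :
    ∀ (x : Fin n → L) (c : L),
      (f fun i => x i ⊔ c) = (f x ⊔ c) ⊓ f (fun _ => ⊤) := by
  induction h with
  | proj k => intro x c; simp
  | const d => intro x c; exact (inf_eq_right.mpr le_sup_left).symm
  | @inf f g hf hg ihf ihg =>
    intro x c
    simp only [ihf, ihg]
    rw [sup_inf_right, inf_inf_inf_comm]
  | @sup f g hf hg ihf ihg =>
    intro x c
    simp only [ihf, ihg]
    exact myDistAuxDual (hf.monotone' fun i => le_top) (hg.monotone' fun i => le_top)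

/-- The characteristic vector of a finite set of coordinates. -/
def myInd (S : Finset (Fin n)) : Fin n → L := fun i => if i ∈ S then ⊤ else ⊥

theorem myPolyFinsetSup {ι : Type*} (s : Finset ι) (F : ι → (Fin n → L) → L) :
    (∀ i ∈ s, IsLatticePolynomial (F i)) →
      IsLatticePolynomial fun x => s.sup fun i => F i x := by
  induction s using Finset.cons_induction with
  | empty => intro _; simpa using IsLatticePolynomial.const (⊥ : L)
  | cons a s ha ih =>
    intro h
    simp only [Finset.sup_cons]
    exact IsLatticePolynomial.sup (h a (Finset.mem_cons_self a s))
      (ih fun i hi => h i (Finset.mem_cons_of_mem hi))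

theorem myPolyFinsetInf {ι : Type*} (s : Finset ι) (F : ι → (Fin n → L) → L) :
    (∀ i ∈ s, IsLatticePolynomial (F i)) →
      IsLatticePolynomial fun x => s.inf fun i => F i x := by
  induction s using Finset.cons_induction with
  | empty => intro _; simpa using IsLatticePolynomial.const (⊤ : L)
  | cons a s ha ih =>
    intro h
    simp only [Finset.inf_cons]
    exact IsLatticePolynomial.inf (h a (Finset.mem_cons_self a s))
      (ih fun i hi => h i (Finset.mem_cons_of_mem hi))

/-- CNF ≤ DNF. -/
theorem myCnfLeDnf (α : Finset (Fin n) → L) (x : Fin n → L) :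
    (Finset.univ.inf fun S : Finset (Fin n) => α Sᶜ ⊔ S.sup x) ≤
      Finset.univ.sup fun T : Finset (Fin n) => α T ⊓ T.inf x := by
  classical
  have hrw : ∀ S : Finset (Fin n),
      α Sᶜ ⊔ S.sup x =
        (insert none (S.image some) : Finset (Option (Fin n))).sup
          (fun o => Option.elim o (α Sᶜ) x) := by
    intro S
    rw [Finset.sup_insert, Finset.sup_image]
    rfl
  simp only [hrw]
  rw [Finset.inf_sup]
  apply Finset.sup_le
  intro φ hφ
  rw [Finset.mem_pi] at hφ
  set T : Finset (Fin n) :=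
    Finset.univ.filter (fun i => ∃ S : Finset (Fin n), φ S (Finset.mem_univ S) = some i)
    with hT
  refine le_trans (le_inf ?_ ?_)
    (Finset.le_sup (f := fun T : Finset (Fin n) => α T ⊓ T.inf x) (Finset.mem_univ T))
  · -- inf ≤ α T, via the factor for S = Tᶜ
    refine le_trans (Finset.inf_le (Finset.mem_attach _ ⟨Tᶜ, Finset.mem_univ _⟩)) ?_
    rcases ho : φ Tᶜ (Finset.mem_univ Tᶜ) with _ | i
    · simp
    · exfalso
      have hi1 : i ∈ T := by
        rw [hT, Finset.mem_filter]
        exact ⟨Finset.mem_univ i, Tᶜ, ho⟩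
      have := hφ Tᶜ (Finset.mem_univ Tᶜ)
      rw [ho] at this
      rcases Finset.mem_insert.mp this with h' | h'
      · exact Option.some_ne_none i h'
      · rcases Finset.mem_image.mp h' with ⟨j, hj, hj2⟩
        cases Option.some_injective _ hj2
        exact (Finset.mem_compl.mp hj) hi1
  · -- inf ≤ T.inf x
    apply Finset.le_inf
    intro i hi
    rw [hT, Finset.mem_filter] at hi
    rcases hi.2 with ⟨S, hS⟩
    refine le_trans (Finset.inf_le (Finset.mem_attach _ ⟨S, Finset.mem_univ _⟩)) ?_
    rw [hS]
    exact le_rfl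

end Aux

/-- An order-preserving function `f : Lⁿ → L` (`n ≥ 1`) is a lattice
polynomial function iff it satisfies condition (H) and its dual (H*). -/
theorem isLatticePolynomial_iff_condH_condHDual
    {L : Type*} [DistribLattice L] [BoundedOrder L] {n : ℕ} (hn : 1 ≤ n)
    (f : (Fin n → L) → L) (hf : Monotone f) :
    IsLatticePolynomial f ↔ CondH f ∧ CondHDual f := by
  constructor
  · intro hp
    refine ⟨fun x c hc1 hc2 => ?_, fun x c hc1 hc2 => ?_⟩
    · rw [myKeyInf hp x c]
      exact sup_eq_left.mpr (le_inf (hf fun i => bot_le) hc1)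
    · rw [myKeySup hp x c]
      exact inf_eq_left.mpr (sup_le (hf fun i => le_top) hc2)
  · rintro ⟨hH, hHd⟩
    classical
    have hbt : f (fun _ => ⊥) ≤ f (fun _ => ⊤) := hf fun i => bot_le
    have key1 : ∀ (x : Fin n → L) (S : Finset (Fin n)), f (myInd S) ⊓ S.inf x ≤ f x := by
      intro x S
      set a := S.inf x with ha
      set c := (a ⊓ f (fun _ => ⊤)) ⊔ f (fun _ => ⊥) with hc
      have hc1 : f (fun _ => ⊥) ≤ c := le_sup_right
      have hc2 : c ≤ f (fun _ => ⊤) := sup_le inf_le_right hbt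
      have h1 : (f fun i => myInd S i ⊓ c) = f (myInd S) ⊓ c := hH (myInd S) c hc1 hc2
      have h2 : (f fun i => x i ⊔ f (fun _ => ⊥)) = f x := by
        rw [hHd x (f (fun _ => ⊥)) le_rfl hbt]
        exact sup_eq_left.mpr (hf fun i => bot_le)
      have h3 : (fun i => myInd S i ⊓ c) ≤ (fun i => x i ⊔ f (fun _ => ⊥)) := by
        intro i
        by_cases hi : i ∈ S
        · have hmi : myInd (L := L) S i = ⊤ := if_pos hi
          simp only [hmi, top_inf_eq]
          calc c ≤ a ⊔ f (fun _ => ⊥) := sup_le_sup_right inf_le_left _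
            _ ≤ x i ⊔ f (fun _ => ⊥) := sup_le_sup_right (Finset.inf_le hi) _
        · have hmi : myInd (L := L) S i = ⊥ := if_neg hi
          simp only [hmi, bot_inf_eq]
          exact bot_le
      have h4 : f (myInd S) ⊓ c ≤ f x := by rw [← h1, ← h2]; exact hf h3
      have h5 : f (myInd S) ⊓ a ≤ f (myInd S) ⊓ c :=
        le_inf inf_le_left
          (le_sup_of_le_left (le_inf inf_le_right (inf_le_left.trans (hf fun i => le_top))))
      exact h5.trans h4
    have key2 : ∀ (x : Fin n → L) (S : Finset (Fin n)), f x ≤ f (myInd Sᶜ) ⊔ S.sup x := by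
      intro x S
      set b := S.sup x with hb
      set c := (b ⊔ f (fun _ => ⊥)) ⊓ f (fun _ => ⊤) with hc
      have hc1 : f (fun _ => ⊥) ≤ c := le_inf le_sup_right hbt
      have hc2 : c ≤ f (fun _ => ⊤) := inf_le_right
      have h1 : (f fun i => myInd Sᶜ i ⊔ c) = f (myInd Sᶜ) ⊔ c := hHd _ c hc1 hc2
      have h2 : (f fun i => x i ⊓ f (fun _ => ⊤)) = f x := by
        rw [hH x (f (fun _ => ⊤)) hbt le_rfl]
        exact inf_eq_left.mpr (hf fun i => le_top)
      have h3 : (fun i => x i ⊓ f (fun _ => ⊤)) ≤ (fun i => myInd Sᶜ i ⊔ c) := by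
        intro i
        by_cases hi : i ∈ S
        · have hmi : myInd (L := L) Sᶜ i = ⊥ := if_neg (fun h => Finset.mem_compl.mp h hi)
          simp only [hmi, bot_sup_eq]
          exact le_inf (inf_le_left.trans (le_sup_of_le_left (Finset.le_sup hi))) inf_le_right
        · have hmi : myInd (L := L) Sᶜ i = ⊤ := if_pos (Finset.mem_compl.mpr hi)
          simp only [hmi, top_sup_eq]
          exact le_top
      have h4 : f x ≤ f (myInd Sᶜ) ⊔ c := by rw [← h1, ← h2]; exact hf h3
      have h5 : f (myInd Sᶜ) ⊔ c ≤ f (myInd Sᶜ) ⊔ b :=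
        sup_le le_sup_left
          (inf_le_left.trans (sup_le le_sup_right (le_sup_of_le_left (hf fun i => bot_le))))
      exact h4.trans h5
    have hg : IsLatticePolynomial
        (fun x => Finset.univ.sup fun S : Finset (Fin n) => f (myInd S) ⊓ S.inf x) :=
      myPolyFinsetSup _ _ (fun S _ => IsLatticePolynomial.inf (IsLatticePolynomial.const _)
        (myPolyFinsetInf S (fun i => fun x => x i) (fun i _ => IsLatticePolynomial.proj i)))
    have hfg : f = fun x => Finset.univ.sup fun S : Finset (Fin n) => f (myInd S) ⊓ S.inf x := by
      funext x
      apply le_antisymm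
      · calc f x ≤ Finset.univ.inf (fun S : Finset (Fin n) => f (myInd Sᶜ) ⊔ S.sup x) :=
              Finset.le_inf fun S _ => key2 x S
          _ ≤ _ := myCnfLeDnf (fun T => f (myInd T)) x
      · exact Finset.sup_le fun S _ => key1 x S
    rw [hfg]
    exact hg
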